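/- Let f: X → Y be a morphism of G-bornological coarse spaces. Suppose f is a weak coarse equivalence and there exists an entourage U of Y such that for every y ∈ Y there is x ∈ X with f(x) ∈ U[{y}], with stabilizer inclusion G_x ⊆ G_y and finite index |G_y/G_x| < ∞. Then for every G-invariant locally finite subset H of Y there exists a G-invariant locally finite subset L of X and a proper surjective equivariant multivalued map s: L → H with (f×id_Y)(s) a coarse entourage of Y; that is, LF(f) is almost surjective. -/

import Mathlib

open Set

/-- `U[B]`: the result of applying the correspondence `U` to `B`. -/
def relImage {X : Type*} (U : Set (X × X)) (B : Set X) : Set X :=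
  {x | ∃ b ∈ B, (x, b) ∈ U}

/-- the map `f × f` on pairs. -/
def pairMap {X Y : Type*} (f : X → Y) : X × X → Y × Y :=
  fun p => (f p.1, f p.2)

/-- the action of `g` on subsets of `X × X`. -/
def setSMul {G X : Type*} [SMul G X] (g : G) (U : Set (X × X)) : Set (X × X) :=
  (fun p : X × X => (g • p.1, g • p.2)) '' U

/-- A `G`-coarse structure on a `G`-set `X`. -/
structure GCoarse (G X : Type*) [Group G] [MulAction G X] where
  ent : Set (Set (X × X))
  smul_mem : ∀ (g : G), ∀ U ∈ ent, setSMul g U ∈ ent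
  diag_mem : Set.diagonal X ∈ ent
  subset_mem : ∀ U ∈ ent, ∀ V, V ⊆ U → V ∈ ent
  union_mem : ∀ U ∈ ent, ∀ V ∈ ent, U ∪ V ∈ ent
  swap_mem : ∀ U ∈ ent, Prod.swap '' U ∈ ent
  comp_mem : ∀ U ∈ ent, ∀ V ∈ ent,
    {p : X × X | ∃ y : X, (p.1, y) ∈ U ∧ (y, p.2) ∈ V} ∈ ent
  cofinal : ∀ U ∈ ent, ∃ V ∈ ent, U ⊆ V ∧ ∀ g : G, setSMul g V = V

/-- A `G`-bornology on a `G`-set `X`. -/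
structure GBorn (G X : Type*) [Group G] [MulAction G X] where
  bdd : Set (Set X)
  smul_mem : ∀ (g : G), ∀ B ∈ bdd, (fun x => g • x) '' B ∈ bdd
  subset_mem : ∀ B ∈ bdd, ∀ A, A ⊆ B → A ∈ bdd
  union_mem : ∀ B ∈ bdd, ∀ B' ∈ bdd, B ∪ B' ∈ bdd
  covers : ∀ x : X, ∃ B ∈ bdd, x ∈ B

/-- A `G`-bornological coarse space structure on a `G`-set `X`. -/
structure GBornCoarse (G X : Type*) [Group G] [MulAction G X] where
  coarse : GCoarse G X
  born : GBorn G X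
  compat : ∀ U ∈ coarse.ent, ∀ B ∈ born.bdd, relImage U B ∈ born.bdd

/-- a morphism of `G`-bornological coarse spaces: an equivariant, controlled and proper map. -/
def IsMorphism {G X Y : Type*} [Group G] [MulAction G X] [MulAction G Y]
    (SX : GBornCoarse G X) (SY : GBornCoarse G Y) (f : X → Y) : Prop :=
  (∀ (g : G) (x : X), f (g • x) = g • f x) ∧
  (∀ U ∈ SX.coarse.ent, pairMap f '' U ∈ SY.coarse.ent) ∧
  (∀ B ∈ SY.born.bdd, f ⁻¹' B ∈ SX.born.bdd)

/-- let `f : X → Y` be a morphism of `G`-bornological coarse spaces which is a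
weak coarse equivalence, and suppose there is an entourage `U` of `Y` such that every `y ∈ Y`
admits an `x ∈ X` with `f(x) ∈ U[{y}]`, `G_x ⊆ G_y` and `|G_y/G_x| < ∞`.  Then `LF(f)` is almost
surjective: every `G`-invariant locally finite subset `H` of `Y` admits an `f`-shadow, i.e. a
`G`-invariant locally finite subset `L` of `X` together with a proper surjective equivariant
multivalued map `s : L → H` such that `(f × id_Y)(s)` is a coarse entourage of `Y`. -/
theorem stmt17 {G X Y : Type*} [Group G] [MulAction G X] [MulAction G Y]
    (SX : GBornCoarse G X) (SY : GBornCoarse G Y) (f : X → Y)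
    (hmor : IsMorphism SX SY f)
    (hweak : ∃ g : Y → X,
      (∀ U ∈ SY.coarse.ent, pairMap g '' U ∈ SX.coarse.ent) ∧
      (∀ B ∈ SX.born.bdd, g ⁻¹' B ∈ SY.born.bdd) ∧
      ((fun y : Y => (y, f (g y))) '' Set.univ ∈ SY.coarse.ent) ∧
      ((fun x : X => (x, g (f x))) '' Set.univ ∈ SX.coarse.ent))
    (hU : ∃ U ∈ SY.coarse.ent, ∀ y : Y, ∃ x : X,
      f x ∈ relImage U {y} ∧
      MulAction.stabilizer G x ≤ MulAction.stabilizer G y ∧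
      (MulAction.stabilizer G x).relIndex (MulAction.stabilizer G y) ≠ 0)
    (H : Set Y) (hHinv : ∀ g : G, (fun y => g • y) '' H = H)
    (hHlf : ∀ B ∈ SY.born.bdd, (H ∩ B).Finite) :
    ∃ L : Set X,
      (∀ g : G, (fun x => g • x) '' L = L) ∧
      (∀ B ∈ SX.born.bdd, (L ∩ B).Finite) ∧
      ∃ s : Set (X × Y),
        s ⊆ L ×ˢ H ∧
        (∀ ℓ ∈ L, ∃ h : Y, (ℓ, h) ∈ s) ∧
        (∀ h ∈ H, ∃ ℓ : X, (ℓ, h) ∈ s) ∧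
        (∀ g : G, (fun p : X × Y => (g • p.1, g • p.2)) '' s = s) ∧
        (∀ ℓ : X, {h : Y | (ℓ, h) ∈ s}.Finite) ∧
        (∀ h : Y, {ℓ : X | (ℓ, h) ∈ s}.Finite) ∧
        ((fun p : X × Y => (f p.1, p.2)) '' s ∈ SY.coarse.ent) := by
  classical
  obtain ⟨U, hUent, hUprop⟩ := hU
  obtain ⟨V, hVent, hUV, hVinv⟩ := SY.coarse.cofinal U hUent
  obtain ⟨gI, hgc, hgb, hcl1, hcl2⟩ := hweak
  choose x hx hstab hidx using hUprop
  set rep : Y → Y := fun y => (Quotient.mk (MulAction.orbitRel G Y) y).out with hrepdef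
  have hrep_orbit : ∀ y : Y, ∃ g : G, g • y = rep y := fun y => by
    have h := Quotient.mk_out (s := MulAction.orbitRel G Y) y
    rw [MulAction.orbitRel_apply, MulAction.mem_orbit_iff] at h
    exact h
  have hrep_smul : ∀ (g : G) (y : Y), rep (g • y) = rep y := fun g y => by
    simp only [hrepdef]
    congr 1
    exact Quotient.sound (MulAction.mem_orbit y g)
  set s : Set (X × Y) :=
    {p | p.2 ∈ H ∧ ∃ g : G, g • rep p.2 = p.2 ∧ p.1 = g • x (rep p.2)} with hsdef
  set L : Set X := {ℓ | ∃ h : Y, (ℓ, h) ∈ s} with hLdef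
  have hmemH : ∀ (g : G) (h : Y), h ∈ H → g • h ∈ H := fun g h hh => by
    rw [← hHinv g]; exact ⟨h, hh, rfl⟩
  have hUmem : ∀ y : Y, (f (x y), y) ∈ U := fun y => by
    obtain ⟨b, hb, hfb⟩ := hx y
    rw [Set.mem_singleton_iff] at hb
    rwa [hb] at hfb
  have hA : ∀ p ∈ s, (f p.1, p.2) ∈ V := by
    rintro ⟨ℓ, h⟩ ⟨hh, g, hg, hℓ⟩
    dsimp only at hh hg hℓ
    subst hℓ
    show (f (g • x (rep h)), h) ∈ V
    have h1 : (f (x (rep h)), rep h) ∈ V := hUV (hUmem (rep h))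
    have h2 : (g • f (x (rep h)), g • rep h) ∈ setSMul g V :=
      ⟨(f (x (rep h)), rep h), h1, rfl⟩
    rw [hVinv g] at h2
    rw [hmor.1 g (x (rep h))]
    rwa [hg] at h2
  have hsmul_mem_s : ∀ (g : G), ∀ p ∈ s, ((g • p.1, g • p.2) : X × Y) ∈ s := by
    rintro g' ⟨ℓ, h⟩ ⟨hh, g, hg, hℓ⟩
    dsimp only at hh hg hℓ
    subst hℓ
    refine ⟨hmemH g' h hh, g' * g, ?_, ?_⟩
    · show (g' * g) • rep (g' • h) = g' • h
      rw [hrep_smul g' h, mul_smul, hg]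
    · show g' • g • x (rep h) = (g' * g) • x (rep (g' • h))
      rw [hrep_smul g' h, mul_smul]
  have hseq : ∀ g : G, (fun p : X × Y => (g • p.1, g • p.2)) '' s = s := by
    intro g
    apply Set.Subset.antisymm
    · rintro _ ⟨p, hp, rfl⟩; exact hsmul_mem_s g p hp
    · intro p hp
      refine ⟨(g⁻¹ • p.1, g⁻¹ • p.2), hsmul_mem_s g⁻¹ p hp, ?_⟩
      simp
  have hfib_h : ∀ h : Y, {ℓ : X | (ℓ, h) ∈ s}.Finite := by
    intro h
    by_cases hne : {ℓ : X | (ℓ, h) ∈ s}.Nonempty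
    · obtain ⟨ℓ0, hh0, g0, hg0, hℓ0⟩ := hne
      set K := MulAction.stabilizer G (rep h) with hK
      set S := (MulAction.stabilizer G (x (rep h))).subgroupOf K with hS
      have hfin : Finite (K ⧸ S) := by
        have h5 := hidx (rep h)
        rw [Subgroup.relIndex, Subgroup.index] at h5
        exact (Nat.card_ne_zero.mp h5).2
      apply Set.Finite.subset (Set.finite_range
        (fun q : K ⧸ S => (g0 * ((Quotient.out q : K) : G)) • x (rep h)))
      rintro ℓ ⟨hh, g, hg, hℓ⟩
      dsimp only at hh hg hℓ
      subst hℓ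
      have hk : g0⁻¹ * g ∈ K := by
        rw [hK, MulAction.mem_stabilizer_iff, mul_smul, hg, inv_smul_eq_iff, hg0]
      refine ⟨(⟦⟨g0⁻¹ * g, hk⟩⟧ : K ⧸ S), ?_⟩
      set q : K ⧸ S := (⟦⟨g0⁻¹ * g, hk⟩⟧ : K ⧸ S) with hq
      have h2 : ((⟦(⟨g0⁻¹ * g, hk⟩ : K)⟧ : K ⧸ S)) = ⟦Quotient.out q⟧ := by
        rw [Quotient.out_eq]
      have h3 : (⟨g0⁻¹ * g, hk⟩ : K)⁻¹ * Quotient.out q ∈ S := QuotientGroup.eq.mp h2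
      have h3' : (((⟨g0⁻¹ * g, hk⟩ : K)⁻¹ * Quotient.out q : K) : G)
          ∈ MulAction.stabilizer G (x (rep h)) := Subgroup.mem_subgroupOf.mp h3
      have h4 : (((⟨g0⁻¹ * g, hk⟩ : K)⁻¹ * Quotient.out q : K) : G) • x (rep h) = x (rep h) :=
        MulAction.mem_stabilizer_iff.mp h3'
      have h5 : ((g0⁻¹ * g)⁻¹ * ((Quotient.out q : K) : G)) • x (rep h) = x (rep h) := by
        simpa using h4
      show (g0 * ((Quotient.out q : K) : G)) • x (rep h) = g • x (rep h)
      have h6 : g0 * ((Quotient.out q : K) : G)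
          = g * ((g0⁻¹ * g)⁻¹ * ((Quotient.out q : K) : G)) := by
        group
      rw [h6, mul_smul, h5]
    · rw [Set.not_nonempty_iff_eq_empty] at hne
      rw [hne]; exact Set.finite_empty
  have hsingbdd : ∀ y : Y, ({y} : Set Y) ∈ SY.born.bdd := fun y => by
    obtain ⟨B, hB, hyB⟩ := SY.born.covers y
    exact SY.born.subset_mem B hB {y} (by simpa)
  have hswapV := SY.coarse.swap_mem V hVent
  have hfib_l : ∀ ℓ : X, {h : Y | (ℓ, h) ∈ s}.Finite := by
    intro ℓ
    have hbdd : relImage (Prod.swap '' V) {f ℓ} ∈ SY.born.bdd :=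
      SY.compat _ hswapV _ (hsingbdd (f ℓ))
    apply (hHlf _ hbdd).subset
    intro h hmem
    exact ⟨hmem.1, f ℓ, rfl, ⟨(f ℓ, h), hA (ℓ, h) hmem, rfl⟩⟩
  have hfB : ∀ B ∈ SX.born.bdd, f '' B ∈ SY.born.bdd := by
    intro B hB
    have hW0 : Prod.swap '' ((fun x : X => (x, gI (f x))) '' Set.univ) ∈ SX.coarse.ent :=
      SX.coarse.swap_mem _ hcl2
    have hC := SX.compat _ hW0 B hB
    have hpre := hgb _ hC
    apply SY.born.subset_mem _ hpre
    rintro y ⟨b, hb, rfl⟩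
    show gI (f b) ∈ relImage (Prod.swap '' ((fun x : X => (x, gI (f x))) '' Set.univ)) B
    exact ⟨b, hb, (b, gI (f b)), ⟨b, trivial, rfl⟩, rfl⟩
  have hLlf : ∀ B ∈ SX.born.bdd, (L ∩ B).Finite := by
    intro B hB
    have hFbdd : relImage (Prod.swap '' V) (f '' B) ∈ SY.born.bdd :=
      SY.compat _ hswapV _ (hfB B hB)
    have hF : (H ∩ relImage (Prod.swap '' V) (f '' B)).Finite := hHlf _ hFbdd
    apply Set.Finite.subset (Set.Finite.biUnion hF
      (fun h _ => hfib_h h))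
    rintro ℓ ⟨⟨h, hs⟩, hℓB⟩
    exact Set.mem_biUnion ⟨hs.1, f ℓ, ⟨ℓ, hℓB, rfl⟩, ⟨(f ℓ, h), hA (ℓ, h) hs, rfl⟩⟩ hs
  have hsurj : ∀ h ∈ H, ∃ ℓ : X, (ℓ, h) ∈ s := by
    intro h hh
    obtain ⟨g, hg⟩ := hrep_orbit h
    exact ⟨g⁻¹ • x (rep h), hh, g⁻¹, by rw [← hg, inv_smul_smul], rfl⟩
  have hLinv : ∀ g : G, (fun x => g • x) '' L = L := by
    intro g
    apply Set.Subset.antisymm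
    · rintro _ ⟨ℓ, ⟨h, hs⟩, rfl⟩
      exact ⟨g • h, hsmul_mem_s g (ℓ, h) hs⟩
    · rintro ℓ ⟨h, hs⟩
      exact ⟨g⁻¹ • ℓ, ⟨g⁻¹ • h, hsmul_mem_s g⁻¹ (ℓ, h) hs⟩, smul_inv_smul g ℓ⟩
  refine ⟨L, hLinv, hLlf, s, ?_, ?_, hsurj, hseq, hfib_l, hfib_h, ?_⟩
  · rintro ⟨ℓ, h⟩ hp
    exact ⟨⟨h, hp⟩, hp.1⟩
  · intro ℓ hℓ; exact hℓ
  · apply SY.coarse.subset_mem V hVent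
    rintro _ ⟨p, hp, rfl⟩
    exact hA p hp
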